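/- Suppose ρ ∈ M_2(ℂ)⊗M_2(ℂ) is block-positive and its diagonal entries at the positions indexed (1,2) and (2,1) (in the lexicographic product basis) are zero. Then ρ = ρ_{a,b,α,β} for some real a, b ≥ 0 and complex α, β; that is, all entries of ρ vanish except possibly the (1,1)- and (4,4)-diagonal entries, the (1,4)- and (4,1)-entries, and the (2,3)- and (3,2)-entries, with ρ Hermitian at these positions. -/

import Mathlib

open Matrix ComplexOrder

noncomputable section

/-- The product (simple tensor) vector `ξ ⊗ η` in `ℂ^m ⊗ ℂ^n = ℂ^{m × n}`. -/
def prodVec {m n : ℕ} (ξ : Fin m → ℂ) (η : Fin n → ℂ) : Fin m × Fin n → ℂ :=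
  fun p => ξ p.1 * η p.2

/-- A matrix `ρ ∈ M_m(ℂ) ⊗ M_n(ℂ)`, viewed as a matrix indexed by pairs via the
lexicographically ordered product basis, is block-positive if
`⟨ξ ⊗ η | ρ | ξ ⊗ η⟩ ≥ 0` for all `ξ ∈ ℂ^m`, `η ∈ ℂ^n`. -/
def BlockPos {m n : ℕ} (ρ : Matrix (Fin m × Fin n) (Fin m × Fin n) ℂ) : Prop :=
  ∀ (ξ : Fin m → ℂ) (η : Fin n → ℂ),
    0 ≤ star (prodVec ξ η) ⬝ᵥ ρ *ᵥ prodVec ξ η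

/-- The matrix `ρ_{a,b,α,β} ∈ M_2(ℂ) ⊗ M_2(ℂ)`, given in the lexicographically
ordered product basis by the rows `(a,0,0,α)`, `(0,0,β,0)`, `(0,β̄,0,0)`, `(ᾱ,0,0,b)`. -/
def rhoMat (a b : ℝ) (α β : ℂ) : Matrix (Fin 2 × Fin 2) (Fin 2 × Fin 2) ℂ :=
  Matrix.of fun p q =>
    if p = ((0 : Fin 2), (0 : Fin 2)) ∧ q = ((0 : Fin 2), (0 : Fin 2)) then (a : ℂ)
    else if p = ((1 : Fin 2), (1 : Fin 2)) ∧ q = ((1 : Fin 2), (1 : Fin 2)) then (b : ℂ)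
    else if p = ((0 : Fin 2), (0 : Fin 2)) ∧ q = ((1 : Fin 2), (1 : Fin 2)) then α
    else if p = ((1 : Fin 2), (1 : Fin 2)) ∧ q = ((0 : Fin 2), (0 : Fin 2)) then
      (starRingEnd ℂ) α
    else if p = ((0 : Fin 2), (1 : Fin 2)) ∧ q = ((1 : Fin 2), (0 : Fin 2)) then β
    else if p = ((1 : Fin 2), (0 : Fin 2)) ∧ q = ((0 : Fin 2), (1 : Fin 2)) then
      (starRingEnd ℂ) β
    else 0

/-- If `(u*t + v*conj t).im = 0` at `t = 1` and `t = I`, then `v = conj u`. -/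
lemma auxIm' {u v : ℂ} (h1 : (u * 1 + v * starRingEnd ℂ 1).im = 0)
    (hI : (u * Complex.I + v * starRingEnd ℂ Complex.I).im = 0) :
    v = starRingEnd ℂ u := by
  simp [Complex.add_im, Complex.mul_im, Complex.conj_im, Complex.conj_re] at h1 hI
  apply Complex.ext <;> simp [Complex.conj_re, Complex.conj_im] <;> linarith

/-- If `0 ≤ c + u*t + v*conj t` for all `t : ℂ`, then `u = v = 0` and `0 ≤ c`. -/
lemma auxPos {c u v : ℂ} (h : ∀ t : ℂ, 0 ≤ c + (u * t + v * starRingEnd ℂ t)) :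
    u = 0 ∧ v = 0 ∧ 0 ≤ c := by
  have him : ∀ t : ℂ, (c + (u * t + v * starRingEnd ℂ t)).im = 0 := fun t =>
    ((Complex.le_def.mp (h t)).2).symm
  have h0 : 0 ≤ c := by simpa using h 0
  have hc : c.im = 0 := (Complex.le_def.mp h0).2.symm
  have hv : v = starRingEnd ℂ u := by
    apply auxIm'
    · have := him 1; simp [Complex.add_im, hc] at this ⊢; linarith
    · have := him Complex.I; simp [Complex.add_im, hc] at this ⊢; linarith
  have hu : u = 0 := by
    by_contra hu
    have hn : 0 < Complex.normSq u := Complex.normSq_pos.mpr hu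
    set r : ℝ := (c.re + 1) / (2 * Complex.normSq u) with hr
    have ht := h (-(r : ℂ) * starRingEnd ℂ u)
    rw [hv] at ht
    have hexp : c + (u * (-(r : ℂ) * starRingEnd ℂ u)
        + starRingEnd ℂ u * starRingEnd ℂ (-(r : ℂ) * starRingEnd ℂ u))
        = c - 2 * (r : ℂ) * (Complex.normSq u : ℂ) := by
      have hcj : starRingEnd ℂ (-(r : ℂ) * starRingEnd ℂ u) = -(r : ℂ) * u := by
        simp [_root_.map_mul, Complex.conj_conj, Complex.conj_ofReal]
      rw [hcj]
      linear_combination (-2 * (r : ℂ)) * (Complex.mul_conj u)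
    rw [hexp] at ht
    have hre := (Complex.le_def.mp ht).1
    simp only [Complex.sub_re, Complex.zero_re, Complex.mul_re, Complex.ofReal_re,
      Complex.ofReal_im, Complex.re_ofNat, Complex.im_ofNat] at hre
    have h2 : r * Complex.normSq u = (c.re + 1) / 2 := by
      rw [hr]; field_simp
    nlinarith [hre, h2]
  exact ⟨hu, by rw [hv, hu, map_zero], h0⟩

/-- If `0 ≤ c + d*|t|² + u*t + v*conj t` for all `t : ℂ` with `c, d` real,
then `v = conj u`. -/
lemma auxHerm {c d u v : ℂ} (hc : c.im = 0) (hd : d.im = 0)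
    (h : ∀ t : ℂ, 0 ≤ c + d * (t * starRingEnd ℂ t) + (u * t + v * starRingEnd ℂ t)) :
    v = starRingEnd ℂ u := by
  have him : ∀ t : ℂ, (c + d * (t * starRingEnd ℂ t) + (u * t + v * starRingEnd ℂ t)).im = 0 :=
    fun t => ((Complex.le_def.mp (h t)).2).symm
  apply auxIm'
  · have := him 1
    simp [Complex.add_im, Complex.mul_im, hc, hd] at this ⊢
    linarith
  · have := him Complex.I
    simp [Complex.add_im, Complex.mul_im, Complex.conj_I, hc, hd] at this ⊢
    linarith

/-- If `ρ ∈ M_2(ℂ) ⊗ M_2(ℂ)` is block-positive and its diagonal entries at the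
positions `(1,2)` and `(2,1)` of the lexicographic product basis vanish, then
`ρ = ρ_{a,b,α,β}` for some reals `a, b ≥ 0` and complex `α, β`. -/
theorem blockPos_two_zero_diag (ρ : Matrix (Fin 2 × Fin 2) (Fin 2 × Fin 2) ℂ)
    (hρ : BlockPos ρ)
    (h01 : ρ ((0 : Fin 2), (1 : Fin 2)) ((0 : Fin 2), (1 : Fin 2)) = 0)
    (h10 : ρ ((1 : Fin 2), (0 : Fin 2)) ((1 : Fin 2), (0 : Fin 2)) = 0) :
    ∃ (a b : ℝ) (α β : ℂ), 0 ≤ a ∧ 0 ≤ b ∧ ρ = rhoMat a b α β := by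
  have kA : ∀ t : ℂ, 0 ≤ ρ 0 0 + (ρ 0 (0, 1) * t + ρ (0, 1) 0 * starRingEnd ℂ t) := by
    intro t
    have h := hρ ![1, 0] ![1, t]
    simp [prodVec, dotProduct, mulVec, Fintype.sum_prod_type, Fin.sum_univ_two] at h
    simp only [Prod.mk_zero_zero, Prod.mk_one_one] at h
    convert h using 1
    rw [h01]; ring
  have kB : ∀ t : ℂ, 0 ≤ ρ 1 1 + (ρ 1 (1, 0) * t + ρ (1, 0) 1 * starRingEnd ℂ t) := by
    intro t
    have h := hρ ![0, 1] ![t, 1]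
    simp [prodVec, dotProduct, mulVec, Fintype.sum_prod_type, Fin.sum_univ_two] at h
    simp only [Prod.mk_zero_zero, Prod.mk_one_one] at h
    convert h using 1
    rw [h10]; ring
  have kC : ∀ t : ℂ, 0 ≤ ρ 0 0 + (ρ 0 (1, 0) * t + ρ (1, 0) 0 * starRingEnd ℂ t) := by
    intro t
    have h := hρ ![1, t] ![1, 0]
    simp [prodVec, dotProduct, mulVec, Fintype.sum_prod_type, Fin.sum_univ_two] at h
    simp only [Prod.mk_zero_zero, Prod.mk_one_one] at h
    convert h using 1
    rw [h10]; ring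
  have kD : ∀ t : ℂ, 0 ≤ ρ 1 1 + (ρ 1 (0, 1) * t + ρ (0, 1) 1 * starRingEnd ℂ t) := by
    intro t
    have h := hρ ![t, 1] ![0, 1]
    simp [prodVec, dotProduct, mulVec, Fintype.sum_prod_type, Fin.sum_univ_two] at h
    simp only [Prod.mk_zero_zero, Prod.mk_one_one] at h
    convert h using 1
    rw [h01]; ring
  obtain ⟨hA1, hA2, hA0⟩ := auxPos kA
  obtain ⟨hB1, hB2, hB0⟩ := auxPos kB
  obtain ⟨hC1, hC2, -⟩ := auxPos kC
  obtain ⟨hD1, hD2, -⟩ := auxPos kD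
  have haim : (ρ 0 0).im = 0 := (Complex.le_def.mp hA0).2.symm
  have hbim : (ρ 1 1).im = 0 := (Complex.le_def.mp hB0).2.symm
  have kF1 : ∀ t : ℂ, 0 ≤ ρ 0 0 + ρ 1 1 * (t * starRingEnd ℂ t)
      + ((ρ 0 1 + ρ (1, 0) (0, 1)) * t
        + (ρ 1 0 + ρ (0, 1) (1, 0)) * starRingEnd ℂ t) := by
    intro t
    have h := hρ ![1, 1] ![1, t]
    simp [prodVec, dotProduct, mulVec, Fintype.sum_prod_type, Fin.sum_univ_two] at h
    simp only [Prod.mk_zero_zero, Prod.mk_one_one] at h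
    convert h using 1
    rw [h01, h10, hA1, hA2, hB1, hB2, hC1, hC2, hD1, hD2]; ring
  have kF2 : ∀ t : ℂ, 0 ≤ ρ 0 0 + ρ 1 1 * (t * starRingEnd ℂ t)
      + ((ρ 0 1 * Complex.I - ρ (1, 0) (0, 1) * Complex.I) * t
        + (ρ (0, 1) (1, 0) * Complex.I - ρ 1 0 * Complex.I) * starRingEnd ℂ t) := by
    intro t
    have h := hρ ![1, Complex.I] ![1, t]
    simp [prodVec, dotProduct, mulVec, Fintype.sum_prod_type, Fin.sum_univ_two,
      Complex.conj_I] at h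
    simp only [Prod.mk_zero_zero, Prod.mk_one_one] at h
    convert h using 1
    rw [h01, h10, hA1, hA2, hB1, hB2, hC1, hC2, hD1, hD2]
    linear_combination (ρ 1 1 * t * starRingEnd ℂ t) * Complex.I_sq
  have e1 := auxHerm haim hbim kF1
  have e2 := auxHerm haim hbim kF2
  rw [map_add] at e1
  rw [map_sub, _root_.map_mul, _root_.map_mul, Complex.conj_I] at e2
  have hv : ρ 1 0 = starRingEnd ℂ (ρ 0 1) := by
    linear_combination (e1 + Complex.I * e2) / 2
      + ((ρ 1 0 - starRingEnd ℂ (ρ 0 1) + starRingEnd ℂ (ρ (1, 0) (0, 1))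
          - ρ (0, 1) (1, 0)) / 2) * Complex.I_sq
  have hz : ρ (1, 0) (0, 1) = starRingEnd ℂ (ρ (0, 1) (1, 0)) := by
    have hw : ρ (0, 1) (1, 0) = starRingEnd ℂ (ρ (1, 0) (0, 1)) := by
      linear_combination (e1 - Complex.I * e2) / 2
        + ((ρ (0, 1) (1, 0) + starRingEnd ℂ (ρ 0 1) - starRingEnd ℂ (ρ (1, 0) (0, 1))
            - ρ 1 0) / 2) * Complex.I_sq
    rw [hw, Complex.conj_conj]
  have ha : (((ρ 0 0).re : ℝ) : ℂ) = ρ 0 0 := Complex.ext (by simp) (by simp [haim])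
  have hb : (((ρ 1 1).re : ℝ) : ℂ) = ρ 1 1 := Complex.ext (by simp) (by simp [hbim])
  refine ⟨(ρ 0 0).re, (ρ 1 1).re, ρ 0 1, ρ (0, 1) (1, 0), ?_, ?_, ?_⟩
  · have := (Complex.le_def.mp hA0).1; simpa using this
  · have := (Complex.le_def.mp hB0).1; simpa using this
  · ext ⟨i, k⟩ ⟨j, l⟩
    fin_cases i <;> fin_cases k <;> fin_cases j <;> fin_cases l <;>
      simp +decide [rhoMat, h01, h10, hA1, hA2, hB1, hB2, hC1, hC2, hD1, hD2, hv, hz, ha, hb,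
          Prod.mk_zero_zero, Prod.mk_one_one]

end
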